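/- Let r = 2^m, s = 2^n, d ∈ F_{r^2} \ F_r, c ∈ F_{r^2}, and a ∈ F_{r^2} nonzero. With F and G_a as defined, for any x_0 ∈ F_{r^2} one has G_a(x_0) + G_a(x_0)^r = (d + d^r) a^{s + rs} (x_0 + x_0^r)^s. In particular, if G_a(x_0) = 0 then x_0^r = x_0. -/

import Mathlib

/-- `G_a(x₀) + G_a(x₀)^r = (d + d^r) a^{s+rs} (x₀ + x₀^r)^s`; hence `G_a(x₀) = 0`
implies `x₀^r = x₀`. -/
theorem stmt14 (m n : ℕ) (hm : 1 ≤ m) (hn : 1 ≤ n)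
    (K : Type) [Field K] [Fintype K] (hcard : Fintype.card K = 2 ^ (2 * m))
    (c d : K) (hd : d ^ (2 ^ m) ≠ d) (a : K) (ha : a ≠ 0) (x₀ : K) :
    let r := 2 ^ m; let s := 2 ^ n
    let F : K → K := fun x =>
      x * (x ^ s + x ^ r + c * x ^ (r * s)) + x ^ s * (c ^ r * x ^ r + d * x ^ (r * s))
        + x ^ ((s + 1) * r)
    let G : K → K := fun x => F (a * x) + F (a * x + a) + F a
    G x₀ + (G x₀) ^ r = (d + d ^ r) * a ^ (s + r * s) * (x₀ + x₀ ^ r) ^ s ∧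
      (G x₀ = 0 → x₀ ^ r = x₀) := by
  intro r s F G
  have hp : Nat.Prime (ringChar K) := CharP.char_is_prime K _
  have hdvd : ringChar K ∣ 2 ^ (2 * m) := by
    rw [← hcard]
    exact (CharP.cast_eq_zero_iff K (ringChar K) _).mp (FiniteField.cast_card_eq_zero K)
  have hp2 : ringChar K = 2 :=
    (Nat.prime_dvd_prime_iff_eq hp Nat.prime_two).mp (hp.dvd_of_dvd_pow hdvd)
  haveI : CharP K 2 := hp2 ▸ ringChar.charP K
  haveI : Fact (Nat.Prime 2) := ⟨Nat.prime_two⟩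
  have h2 : (2 : K) = 0 := by exact_mod_cast CharP.cast_eq_zero K 2
  have hadd_r : ∀ x y : K, (x + y) ^ r = x ^ r + y ^ r := fun x y =>
    add_pow_char_pow (p := 2) (n := m) x y
  have hadd_s : ∀ x y : K, (x + y) ^ s = x ^ s + y ^ s := fun x y =>
    add_pow_char_pow (p := 2) (n := n) x y
  have h1 : ∀ x : K, (x ^ r) ^ r = x := by
    intro x
    show (x ^ 2 ^ m) ^ 2 ^ m = x
    rw [← pow_mul, ← pow_add, ← two_mul, ← hcard, FiniteField.pow_card]
  have h3 : ∀ x : K, (x ^ s) ^ r = (x ^ r) ^ s := fun x => pow_right_comm x s r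
  set y := a * x₀ with hy
  set A : K := y * a ^ s + a * y ^ s + (y * a ^ r + a * y ^ r)
      + c * (y * (a ^ r) ^ s) + c * (a * (y ^ r) ^ s)
      + c ^ r * (y ^ r * a ^ s) + c ^ r * (a ^ r * y ^ s)
      + (y ^ r) ^ s * a ^ r + (a ^ r) ^ s * y ^ r with hA
  set B : K := d * (y ^ s * (a ^ r) ^ s + a ^ s * (y ^ r) ^ s) with hB
  have hrs : ∀ x : K, x ^ (r * s) = (x ^ r) ^ s := fun x => pow_mul x r s
  have hsr : ∀ x : K, x ^ ((s + 1) * r) = (x ^ s * x) ^ r := by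
    intro x; rw [pow_mul, pow_succ]
  have hGT : G x₀ = A + B := by
    simp only [G, F, hrs, hsr, hadd_r, hadd_s, mul_pow, hA, hB]
    ring_nf
    simp only [h2, mul_zero, zero_mul, add_zero, zero_add]
    rw [hy]; ring
  have hAr : A ^ r = A := by
    simp only [hA, hadd_r, mul_pow, h1, h3]
    ring
  have hBr : B ^ r = d ^ r * ((y ^ r) ^ s * a ^ s + (a ^ r) ^ s * y ^ s) := by
    simp only [hB, hadd_r, mul_pow, h1, h3]
  have key : G x₀ + (G x₀) ^ r = (d + d ^ r) * a ^ (s + r * s) * (x₀ + x₀ ^ r) ^ s := by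
    rw [hGT, hadd_r, hAr, hBr]
    have hAA : A + A = 0 := CharTwo.add_self_eq_zero A
    rw [show A + B + (A + (d ^ r * ((y ^ r) ^ s * a ^ s + (a ^ r) ^ s * y ^ s)))
        = (A + A) + (B + d ^ r * ((y ^ r) ^ s * a ^ s + (a ^ r) ^ s * y ^ s)) by ring,
      hAA, zero_add, hB]
    rw [pow_add a s (r * s), hrs, hadd_s]
    simp only [hy, mul_pow]
    ring
  refine ⟨key, fun h0 => ?_⟩
  have hR : (d + d ^ r) * a ^ (s + r * s) * (x₀ + x₀ ^ r) ^ s = 0 := by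
    rw [← key, h0, zero_pow (by positivity : r ≠ 0), add_zero]
  have hdne : d + d ^ r ≠ 0 := by
    intro h
    exact hd (by linear_combination h - d * h2)
  have hane : a ^ (s + r * s) ≠ 0 := pow_ne_zero _ ha
  have hx : (x₀ + x₀ ^ r) ^ s = 0 := by
    rcases mul_eq_zero.mp hR with h | h
    · rcases mul_eq_zero.mp h with h | h
      · exact absurd h hdne
      · exact absurd h hane
    · exact h
  have hx0 : x₀ + x₀ ^ r = 0 := pow_eq_zero_iff (by positivity : s ≠ 0) |>.mp hx
  linear_combination hx0 - x₀ * h2
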